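/- Let G be a finite simple connected block graph (every block of G is a complete graph) with exactly ℓ blocks. Then the Helly number of G with respect to Δ-convexity satisfies h_Δ(G) = ℓ + 1. -/

import Mathlib

variable {V : Type*}

/-- A set `S` is Δ-convex in `G` if every vertex adjacent to two adjacent vertices of `S`
belongs to `S`. -/
def DeltaConvex (G : SimpleGraph V) (S : Set V) : Prop :=
  ∀ ⦃u v w : V⦄, u ∈ S → v ∈ S → G.Adj u v → G.Adj w u → G.Adj w v → w ∈ S

/-- The Δ-convex hull of `S`: the smallest Δ-convex set containing `S`. -/
def deltaHull (G : SimpleGraph V) (S : Set V) : Set V :=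
  ⋂₀ {T : Set V | S ⊆ T ∧ DeltaConvex G T}

/-- `S` is Helly independent: the intersection of the hulls of the sets `S \ {a}`, `a ∈ S`,
is empty. -/
def HellyIndep (G : SimpleGraph V) (S : Set V) : Prop :=
  (⋂ a ∈ S, deltaHull G (S \ {a})) = ∅

/-- The Helly number of `G` w.r.t. Δ-convexity: the maximum cardinality of a Helly
independent subset of the vertex set. -/
noncomputable def hellyNumber (G : SimpleGraph V) : ℕ :=
  sSup {n : ℕ | ∃ S : Set V, HellyIndep G S ∧ S.ncard = n}

/-- `S` is Radon independent: no partition of `S` into two nonempty disjoint parts has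
intersecting hulls. -/
def RadonIndep (G : SimpleGraph V) (S : Set V) : Prop :=
  ¬ ∃ S₁ S₂ : Set V, S₁ ∪ S₂ = S ∧ Disjoint S₁ S₂ ∧ S₁.Nonempty ∧ S₂.Nonempty ∧
    (deltaHull G S₁ ∩ deltaHull G S₂).Nonempty

/-- The Radon number of `G` w.r.t. Δ-convexity. -/
noncomputable def radonNumber (G : SimpleGraph V) : ℕ :=
  sSup {n : ℕ | ∃ S : Set V, RadonIndep G S ∧ S.ncard = n}

/-- `S` is convexly independent: `a ∉ ⟨S \ {a}⟩` for every `a ∈ S`. -/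
def ConvIndep (G : SimpleGraph V) (S : Set V) : Prop :=
  ∀ a ∈ S, a ∉ deltaHull G (S \ {a})

/-- The rank of `G` w.r.t. Δ-convexity. -/
noncomputable def rankDelta (G : SimpleGraph V) : ℕ :=
  sSup {n : ℕ | ∃ S : Set V, ConvIndep G S ∧ S.ncard = n}

/-- The independence number: maximum cardinality of a set of pairwise non-adjacent
vertices. -/
noncomputable def alphaNum (G : SimpleGraph V) : ℕ :=
  sSup {n : ℕ | ∃ S : Set V, S.Pairwise (fun a b => ¬ G.Adj a b) ∧ S.ncard = n}

/-- `G` is 2-connected: at least 3 vertices, connected, and deleting any single vertex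
leaves a connected graph. -/
def TwoConnected (G : SimpleGraph V) : Prop :=
  3 ≤ Nat.card V ∧ G.Connected ∧ ∀ v : V, (G.induce {u : V | u ≠ v}).Connected

/-- `G` is chordal: every cycle of length at least 4 has a chord, i.e. an edge of `G`
joining two vertices of the cycle that is not an edge of the cycle. -/
def ChordalGraph (G : SimpleGraph V) : Prop :=
  ∀ (v : V) (c : G.Walk v v), c.IsCycle → 4 ≤ c.length →
    ∃ x y : V, x ∈ c.support ∧ y ∈ c.support ∧ G.Adj x y ∧ s(x, y) ∉ c.edges

/-- `B` induces a connected subgraph of `G` with at least two vertices and no cut vertex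
(so: an edge, or a 2-connected subgraph). -/
def NoCutSet (G : SimpleGraph V) (B : Set V) : Prop :=
  2 ≤ B.ncard ∧ (G.induce B).Connected ∧ ∀ v ∈ B, (G.induce (B \ {v})).Connected

/-- `B` is (the vertex set of) a block of `G`: a maximal 2-connected subgraph, where a
bridge together with its endpoints also counts as a block. -/
def IsBlock (G : SimpleGraph V) (B : Set V) : Prop :=
  NoCutSet G B ∧ ∀ B' : Set V, NoCutSet G B' → B ⊆ B' → B = B'

/-- The set `B` induces a complete subgraph of `G`. -/
def CompleteOn (G : SimpleGraph V) (B : Set V) : Prop :=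
  ∀ u ∈ B, ∀ v ∈ B, u ≠ v → G.Adj u v



-- ===== auxiliary development =====

open Classical

set_option linter.unusedSectionVars false

/-- Abstract convexity with respect to a family of blocks. -/
def AConv (ℬ : Set (Set V)) (T : Set V) : Prop :=
  ∀ B ∈ ℬ, ∀ u ∈ B ∩ T, ∀ v ∈ B ∩ T, u ≠ v → B ⊆ T

def aHull (ℬ : Set (Set V)) (S : Set V) : Set V :=
  ⋂₀ {T | S ⊆ T ∧ AConv ℬ T}

lemma subset_aHull (ℬ : Set (Set V)) (S : Set V) : S ⊆ aHull ℬ S :=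
  fun _ hx => fun _ hT => hT.1 hx

lemma aHull_conv (ℬ : Set (Set V)) (S : Set V) : AConv ℬ (aHull ℬ S) := by
  intro B hB u hu v hv huv w hw
  intro T hT
  exact hT.2 B hB u ⟨hu.1, hu.2 T hT⟩ v ⟨hv.1, hv.2 T hT⟩ huv hw

lemma aHull_min {ℬ : Set (Set V)} {S T : Set V} (h1 : S ⊆ T) (h2 : AConv ℬ T) :
    aHull ℬ S ⊆ T := fun _ hx => hx T ⟨h1, h2⟩

lemma aHull_mono {ℬ : Set (Set V)} {S S' : Set V} (h : S ⊆ S') :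
    aHull ℬ S ⊆ aHull ℬ S' :=
  aHull_min (h.trans (subset_aHull ℬ S')) (aHull_conv ℬ S')

lemma aHull_subset_hull {ℬ : Set (Set V)} {P Q : Set V} (h : P ⊆ aHull ℬ Q) :
    aHull ℬ P ⊆ aHull ℬ Q := aHull_min h (aHull_conv ℬ Q)

lemma aHull_anti {ℬ ℬ' : Set (Set V)} (h : ℬ' ⊆ ℬ) (S : Set V) :
    aHull ℬ' S ⊆ aHull ℬ S :=
  aHull_min (subset_aHull ℬ S) (fun B hB => aHull_conv ℬ S B (h hB))

lemma block_subset_aHull {ℬ : Set (Set V)} {S B : Set V} (hB : B ∈ ℬ) {u v : V}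
    (hu : u ∈ aHull ℬ S) (hub : u ∈ B) (hv : v ∈ aHull ℬ S) (hvb : v ∈ B)
    (huv : u ≠ v) : B ⊆ aHull ℬ S :=
  aHull_conv ℬ S B hB u ⟨hub, hu⟩ v ⟨hvb, hv⟩ huv

/-- The hull only adds vertices from blocks. -/
lemma aHull_subset_union (ℬ : Set (Set V)) (S : Set V) :
    aHull ℬ S ⊆ S ∪ ⋃₀ ℬ := by
  refine aHull_min Set.subset_union_left ?_
  intro B hB u _ v _ _ w hw
  exact Or.inr ⟨B, hB, hw⟩

variable {G : SimpleGraph V}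

lemma induce_singleton_connected (G : SimpleGraph V) (v : V) :
    (G.induce {v}).Connected := by
  have : Nonempty ({v} : Set V) := ⟨⟨v, rfl⟩⟩
  constructor
  intro a b
  have : a = b := Subtype.ext (by
    have ha := a.2; have hb := b.2
    simp only [Set.mem_singleton_iff] at ha hb; rw [ha, hb])
  rw [this]

lemma noCutSet_pair {u v : V} (h : G.Adj u v) : NoCutSet G {u, v} := by
  have hne := h.ne
  refine ⟨by rw [Set.ncard_pair hne], SimpleGraph.induce_pair_connected_of_adj h, ?_⟩
  intro w hw
  rcases hw with rfl | hw
  · have : ({w, v} : Set V) \ {w} = {v} := by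
      ext a; simp only [Set.mem_diff, Set.mem_insert_iff, Set.mem_singleton_iff]
      constructor
      · rintro ⟨rfl | rfl, h2⟩ <;> tauto
      · rintro rfl; exact ⟨Or.inr rfl, hne.symm⟩
    rw [this]; exact induce_singleton_connected G v
  · simp only [Set.mem_singleton_iff] at hw; subst hw
    have : ({u, w} : Set V) \ {w} = {u} := by
      ext a; simp only [Set.mem_diff, Set.mem_insert_iff, Set.mem_singleton_iff]
      constructor
      · rintro ⟨rfl | rfl, h2⟩ <;> tauto
      · rintro rfl; exact ⟨Or.inl rfl, hne⟩
    rw [this]; exact induce_singleton_connected G u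

lemma noCutSet_triangle {u v w : V} (huv : G.Adj u v) (huw : G.Adj u w)
    (hvw : G.Adj v w) : NoCutSet G {u, v, w} := by
  have h1 : ({u, v, w} : Set V) = {u, v} ∪ {w} := by
    ext a; simp [Set.mem_insert_iff]; tauto
  refine ⟨?_, ?_, ?_⟩
  · calc 2 = ({u, v} : Set V).ncard := (Set.ncard_pair huv.ne).symm
    _ ≤ _ := Set.ncard_le_ncard (by intro a ha; rcases ha with rfl | ha; · left; rfl
                                    · right; left; exact ha) (Set.toFinite _)
  · rw [h1]
    have h3 := SimpleGraph.induce_union_connected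
      (SimpleGraph.induce_pair_connected_of_adj huv).preconnected
      (SimpleGraph.induce_pair_connected_of_adj hvw).preconnected
      ⟨v, Or.inr rfl, Or.inl rfl⟩
    have e : ({u, v} ∪ {v, w} : Set V) = {u, v} ∪ {w} := by
      ext a; simp only [Set.mem_union, Set.mem_insert_iff, Set.mem_singleton_iff]; tauto
    rwa [e] at h3
  · intro x hx
    rcases hx with rfl | rfl | hx
    · have : ({x, v, w} : Set V) \ {x} = {v, w} := by
        ext a
        simp only [Set.mem_diff, Set.mem_insert_iff, Set.mem_singleton_iff]
        constructor
        · rintro ⟨rfl | rfl | rfl, h2⟩ <;> tauto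
        · rintro (rfl | rfl)
          · exact ⟨Or.inr (Or.inl rfl), huv.ne'⟩
          · exact ⟨Or.inr (Or.inr rfl), huw.ne'⟩
      rw [this]; exact SimpleGraph.induce_pair_connected_of_adj hvw
    · have : ({u, x, w} : Set V) \ {x} = {u, w} := by
        ext a
        simp only [Set.mem_diff, Set.mem_insert_iff, Set.mem_singleton_iff]
        constructor
        · rintro ⟨rfl | rfl | rfl, h2⟩ <;> tauto
        · rintro (rfl | rfl)
          · exact ⟨Or.inl rfl, huv.ne⟩
          · exact ⟨Or.inr (Or.inr rfl), hvw.ne'⟩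
      rw [this]; exact SimpleGraph.induce_pair_connected_of_adj huw
    · simp only [Set.mem_singleton_iff] at hx; subst hx
      have : ({u, v, x} : Set V) \ {x} = {u, v} := by
        ext a
        simp only [Set.mem_diff, Set.mem_insert_iff, Set.mem_singleton_iff]
        constructor
        · rintro ⟨rfl | rfl | rfl, h2⟩ <;> tauto
        · rintro (rfl | rfl)
          · exact ⟨Or.inl rfl, huw.ne⟩
          · exact ⟨Or.inr (Or.inl rfl), hvw.ne⟩
      rw [this]; exact SimpleGraph.induce_pair_connected_of_adj huv

lemma exists_block_superset [Fintype V] {C : Set V} (hC : NoCutSet G C) :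
    ∃ B : Set V, IsBlock G B ∧ C ⊆ B := by
  classical
  have hfin : ({B : Set V | NoCutSet G B ∧ C ⊆ B}).Finite := Set.toFinite _
  have hne : ({B : Set V | NoCutSet G B ∧ C ⊆ B}).Nonempty := ⟨C, hC, subset_rfl⟩
  obtain ⟨B, hB, hmax⟩ := Set.Finite.exists_maximalFor id _ hfin hne
  refine ⟨B, ⟨hB.1, ?_⟩, hB.2⟩
  intro B' hB' hsub
  exact le_antisymm hsub (hmax ⟨hB', hB.2.trans hsub⟩ hsub)

lemma noCutSet_union [Fintype V] {B B' : Set V} (hB : NoCutSet G B)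
    (hB' : NoCutSet G B') {x y : V} (hx : x ∈ B ∩ B') (hy : y ∈ B ∩ B')
    (hxy : x ≠ y) : NoCutSet G (B ∪ B') := by
  refine ⟨le_trans hB.1 (Set.ncard_le_ncard Set.subset_union_left (Set.toFinite _)), ?_, ?_⟩
  · exact SimpleGraph.induce_union_connected hB.2.1.preconnected hB'.2.1.preconnected ⟨x, hx⟩
  · intro v hv
    rw [Set.union_diff_distrib]
    have c1 : (G.induce (B \ {v})).Connected := by
      by_cases h : v ∈ B
      · exact hB.2.2 v h
      · rw [Set.diff_singleton_eq_self h]; exact hB.2.1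
    have c2 : (G.induce (B' \ {v})).Connected := by
      by_cases h : v ∈ B'
      · exact hB'.2.2 v h
      · rw [Set.diff_singleton_eq_self h]; exact hB'.2.1
    refine SimpleGraph.induce_union_connected c1.preconnected c2.preconnected ?_
    rcases eq_or_ne x v with rfl | hxv
    · exact ⟨y, ⟨⟨hy.1, hxy.symm⟩, ⟨hy.2, hxy.symm⟩⟩⟩
    · exact ⟨x, ⟨⟨hx.1, hxv⟩, ⟨hx.2, hxv⟩⟩⟩

lemma blocks_inter_subsingleton [Fintype V] {B B' : Set V} (hB : IsBlock G B)
    (hB' : IsBlock G B') (hne : B ≠ B') : (B ∩ B').Subsingleton := by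
  intro x hx y hy
  by_contra hxy
  have hu := noCutSet_union hB.1 hB'.1 hx hy hxy
  have h1 : B = B ∪ B' := hB.2 _ hu Set.subset_union_left
  have h2 : B' = B ∪ B' := hB'.2 _ hu Set.subset_union_right
  exact hne (h1.trans h2.symm)

variable {G : SimpleGraph V} [Fintype V]

lemma edge_in_block {u v : V} (h : G.Adj u v) :
    ∃ B : Set V, IsBlock G B ∧ u ∈ B ∧ v ∈ B := by
  obtain ⟨B, hB, hsub⟩ := exists_block_superset (noCutSet_pair h)
  exact ⟨B, hB, hsub (Or.inl rfl), hsub (Or.inr rfl)⟩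

lemma triangle_in_block {u v w : V} (huv : G.Adj u v) (huw : G.Adj u w)
    (hvw : G.Adj v w) : ∃ B : Set V, IsBlock G B ∧ u ∈ B ∧ v ∈ B ∧ w ∈ B := by
  obtain ⟨B, hB, hsub⟩ := exists_block_superset (noCutSet_triangle huv huw hvw)
  exact ⟨B, hB, hsub (Or.inl rfl), hsub (Or.inr (Or.inl rfl)), hsub (Or.inr (Or.inr rfl))⟩

lemma deltaConvex_iff_aConv (hbg : ∀ B : Set V, IsBlock G B → CompleteOn G B)
    (T : Set V) : DeltaConvex G T ↔ AConv {B | IsBlock G B} T := by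
  constructor
  · intro hT B hB u hu v hv huv w hw
    rcases eq_or_ne w u with rfl | hwu; · exact hu.2
    rcases eq_or_ne w v with rfl | hwv; · exact hv.2
    have hcomp := hbg B hB
    exact hT hu.2 hv.2 (hcomp u hu.1 v hv.1 huv) (hcomp w hw u hu.1 hwu)
      (hcomp w hw v hv.1 hwv)
  · intro hT u v w hu hv huv hwu hwv
    obtain ⟨B, hB, huB, hvB, hwB⟩ := triangle_in_block huv hwu.symm hwv.symm
    exact hT B hB u ⟨huB, hu⟩ v ⟨hvB, hv⟩ huv.ne hwB

lemma deltaHull_eq_aHull (hbg : ∀ B : Set V, IsBlock G B → CompleteOn G B)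
    (S : Set V) : deltaHull G S = aHull {B | IsBlock G B} S := by
  have h : {T : Set V | S ⊆ T ∧ DeltaConvex G T}
      = {T | S ⊆ T ∧ AConv {B | IsBlock G B} T} := by
    ext T
    exact and_congr_right (fun _ => deltaConvex_iff_aConv hbg T)
  unfold deltaHull aHull
  rw [h]

lemma exists_adj_of_connected (hconn : G.Connected) (h2 : 2 ≤ Fintype.card V)
    (v : V) : ∃ u, G.Adj v u := by
  obtain ⟨w, hw⟩ := Fintype.exists_ne_of_one_lt_card h2 v
  obtain ⟨p⟩ := hconn v w
  cases p with
  | nil => exact absurd rfl hw.symm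
  | cons h _ => exact ⟨_, h⟩

lemma mem_block_of_connected (hconn : G.Connected) (h2 : 2 ≤ Fintype.card V)
    (v : V) : ∃ B, IsBlock G B ∧ v ∈ B := by
  obtain ⟨u, hu⟩ := exists_adj_of_connected hconn h2 v
  obtain ⟨B, hB, h1, _⟩ := edge_in_block hu
  exact ⟨B, hB, h1⟩

/-- The family of blocks is "chain-connected". -/
lemma blocks_chain_connected (hconn : G.Connected) {B B' : Set V}
    (hB : IsBlock G B) (hB' : IsBlock G B') {u v : V} (hu : u ∈ B) (hv : v ∈ B') :
    Relation.ReflTransGen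
      (fun C C' => IsBlock G C ∧ IsBlock G C' ∧ (C ∩ C').Nonempty) B B' := by
  suffices h : ∀ (a b : V) (_ : G.Walk a b) (C : Set V), IsBlock G C → a ∈ C →
      b ∈ B' → Relation.ReflTransGen
        (fun C C' => IsBlock G C ∧ IsBlock G C' ∧ (C ∩ C').Nonempty) C B' by
    exact h u v (hconn u v).some B hB hu hv
  intro a b p
  induction p with
  | nil =>
    intro C hC ha hb
    rcases eq_or_ne C B' with rfl | hne
    · exact Relation.ReflTransGen.refl
    · exact Relation.ReflTransGen.single ⟨hC, hB', ⟨_, ha, hb⟩⟩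
  | @cons a c b hac p ih =>
    intro C hC ha hb
    obtain ⟨D, hD, haD, hcD⟩ := edge_in_block hac
    have step : Relation.ReflTransGen
        (fun C C' => IsBlock G C ∧ IsBlock G C' ∧ (C ∩ C').Nonempty) C D := by
      rcases eq_or_ne C D with rfl | hne
      · exact Relation.ReflTransGen.refl
      · exact Relation.ReflTransGen.single ⟨hC, hD, ⟨a, ha, haD⟩⟩
    exact step.trans (ih D hD hcD hb)

lemma exists_ne_mem_of_two_le_ncard {α : Type*} {B : Set α} (h : 2 ≤ B.ncard) (v : α) :
    ∃ a, a ∈ B ∧ a ≠ v := by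
  by_contra hc
  push_neg at hc
  have hsub : B ⊆ {v} := fun a ha => hc a ha
  have := Set.ncard_le_ncard hsub (Set.finite_singleton v)
  simp [Set.ncard_singleton] at this
  omega

lemma chain_union_conn (G : SimpleGraph V) (D : ℕ → Set V) :
    ∀ t, (∀ i, i ≤ t → (G.induce (D i)).Connected) →
      (∀ i, i < t → (D i ∩ D (i+1)).Nonempty) →
      (G.induce (⋃ i ∈ Set.Iic t, D i)).Connected := by
  intro t
  induction t with
  | zero =>
    intro h1 _
    have he : ⋃ i ∈ Set.Iic 0, D i = D 0 := by simp
    rw [he]; exact h1 0 le_rfl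
  | succ n ih =>
    intro h1 h2
    have hU : ⋃ i ∈ Set.Iic (n+1), D i = (⋃ i ∈ Set.Iic n, D i) ∪ D (n+1) := by
      ext a
      simp only [Set.mem_iUnion, Set.mem_Iic, Set.mem_union, exists_prop]
      constructor
      · rintro ⟨i, hi, hai⟩
        rcases Nat.lt_or_ge i (n+1) with h | h
        · exact Or.inl ⟨i, by omega, hai⟩
        · have : i = n + 1 := by omega
          subst this; exact Or.inr hai
      · rintro (⟨i, hi, hai⟩ | ha)
        · exact ⟨i, by omega, hai⟩
        · exact ⟨n+1, le_rfl, ha⟩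
    rw [hU]
    refine SimpleGraph.induce_union_connected
      (ih (fun i hi => h1 i (by omega)) (fun i hi => h2 i (by omega))).preconnected
      (h1 (n+1) le_rfl).preconnected ?_
    obtain ⟨a, ha⟩ := h2 n (by omega)
    exact ⟨a, Set.mem_iUnion₂.2 ⟨n, by simp, ha.1⟩, ha.2⟩

def BadChain (G : SimpleGraph V) (B : Set V) (k : ℕ) (p : ℕ → V) (C : ℕ → Set V) : Prop :=
  p 0 ∈ B ∧ p k ∈ B ∧ p 0 ≠ p k ∧
  ∀ i, i < k → IsBlock G (C i) ∧ C i ≠ B ∧ p i ∈ C i ∧ p (i+1) ∈ C i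

lemma badChain_false [Fintype V] {B : Set V} (hB : IsBlock G B) :
    ∀ k (p : ℕ → V) (C : ℕ → Set V), BadChain G B k p C → False := by
  intro k
  induction k using Nat.strong_induction_on with
  | _ k IH =>
  intro p C hbc
  obtain ⟨h0, hk, hne, hstep⟩ := hbc
  rcases Nat.eq_zero_or_pos k with rfl | hkpos
  · exact hne rfl
  -- Reduction R1/R3: splice
  by_cases hr : ∃ i j, i < j ∧ j ≤ k ∧ (p i = p j ∨ (C i = C j ∧ j < k))
  · obtain ⟨i, j, hij, hjk, hcase⟩ := hr
    have hppik : (i = 0 ∧ j = k) → p i = p j → False := by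
      rintro ⟨rfl, rfl⟩ hpp; exact hne hpp
    set k' := k - (j - i) with hk'
    set p' : ℕ → V := fun m => if m ≤ i then p m else p (m + (j - i)) with hp'
    set C' : ℕ → Set V := fun m =>
      if m < i then C m else if m = i then C j else C (m + (j - i)) with hC'
    have hk'lt : k' < k := by omega
    apply IH k' hk'lt p' C'
    have hpik : j < k → p i ∈ C j := by
      intro hjltk
      rcases hcase with hpp | ⟨hCC, _⟩
      · exact hpp ▸ (hstep j hjltk).2.2.1
      · exact hCC ▸ (hstep i (by omega)).2.2.1
    have hpieq : j = k → p i = p k := by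
      intro hjeq
      rcases hcase with hpp | ⟨_, hjk'⟩
      · exact hjeq ▸ hpp
      · omega
    have ek : p' k' = p k := by
      by_cases hcc : k' ≤ i
      · have hik : k' = i := by omega
        have hjeq : j = k := by omega
        have : p' k' = p k' := by simp only [hp', if_pos hcc]
        rw [this, hik]
        exact hpieq hjeq
      · simp only [hp', if_neg hcc]
        congr 1; omega
    refine ⟨?_, ?_, ?_, ?_⟩
    · simp only [hp', if_pos (Nat.zero_le i)]; exact h0
    · rw [ek]; exact hk
    · have e0 : p' 0 = p 0 := by simp [hp']
      rw [e0, ek]; exact hne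
    · intro m hm
      by_cases h1 : m < i
      · have e1 : p' m = p m := by simp only [hp', if_pos (by omega : m ≤ i)]
        have e2 : p' (m+1) = p (m+1) := by simp only [hp', if_pos (by omega : m+1 ≤ i)]
        have e3 : C' m = C m := by simp only [hC', if_pos h1]
        rw [e1, e2, e3]
        exact hstep m (by omega)
      · by_cases h2 : m = i
        · subst h2
          have hjltk : j < k := by omega
          have e1 : p' m = p m := by simp only [hp', if_pos le_rfl]
          have e2 : p' (m+1) = p (j+1) := by
            simp only [hp', if_neg (by omega : ¬ (m + 1 ≤ m))]
            congr 1; omega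
          have e3 : C' m = C j := by simp [hC']
          rw [e1, e2, e3]
          have hs := hstep j hjltk
          exact ⟨hs.1, hs.2.1, hpik hjltk, hs.2.2.2⟩
        · have h3 : i < m := by omega
          have e1 : p' m = p (m + (j-i)) := by
            simp only [hp', if_neg (by omega : ¬ (m ≤ i))]
          have e2 : p' (m+1) = p (m + (j-i) + 1) := by
            simp only [hp', if_neg (by omega : ¬ (m + 1 ≤ i))]
            congr 1; omega
          have e3 : C' m = C (m + (j-i)) := by
            simp only [hC', if_neg (by omega : ¬ (m < i)), if_neg h2]
          rw [e1, e2, e3]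
          exact hstep (m + (j-i)) (by omega)
  -- no splice: injectivity
  push_neg at hr
  have hinj : ∀ i j, i < j → j ≤ k → p i ≠ p j := fun i j hij hjk =>
    (hr i j hij hjk).1
  -- Reduction R2: intermediate point in B
  by_cases hr2 : ∃ i, 0 < i ∧ i < k ∧ p i ∈ B
  · obtain ⟨i, hi0, hik, hiB⟩ := hr2
    exact IH i hik p C ⟨h0, hiB, hinj 0 i hi0 (by omega), fun m hm => hstep m (by omega)⟩
  push_neg at hr2
  -- final: build the union W and contradict maximality of B
  set D : ℕ → Set V := fun i => if i = 0 then B else C (i-1) with hD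
  set W : Set V := ⋃ i ∈ Set.Iic k, D i with hW
  have hD0 : D 0 = B := by simp [hD]
  have hDs : ∀ m, D (m+1) = C m := by intro m; simp [hD]
  have hBW : B ⊆ W := fun a ha => Set.mem_iUnion₂.2 ⟨0, by simp, by rwa [hD0]⟩
  have hCW : ∀ m, m < k → C m ⊆ W := by
    intro m hm a ha
    exact Set.mem_iUnion₂.2 ⟨m+1, by simp; omega, by rwa [hDs]⟩
  have hDconn : ∀ i, i ≤ k → (G.induce (D i)).Connected := by
    intro i hi
    rcases Nat.eq_zero_or_pos i with rfl | hipos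
    · rw [hD0]; exact hB.1.2.1
    · obtain ⟨m, rfl⟩ : ∃ m, i = m + 1 := ⟨i - 1, by omega⟩
      rw [hDs]; exact ((hstep m (by omega)).1).1.2.1
  have hglue : ∀ i, i < k → (D i ∩ D (i+1)).Nonempty := by
    intro i hi
    rcases Nat.eq_zero_or_pos i with rfl | hipos
    · exact ⟨p 0, by rw [hD0]; exact h0, by rw [hDs]; exact (hstep 0 hkpos).2.2.1⟩
    · obtain ⟨m, rfl⟩ : ∃ m, i = m + 1 := ⟨i - 1, by omega⟩
      exact ⟨p (m+1), by rw [hDs]; exact (hstep m (by omega)).2.2.2,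
        by rw [hDs]; exact (hstep (m+1) hi).2.2.1⟩
  have hWconn : (G.induce W).Connected := chain_union_conn G D k hDconn hglue
  have hWnc : NoCutSet G W := by
    refine ⟨le_trans hB.1.1 (Set.ncard_le_ncard hBW (Set.toFinite _)), hWconn, ?_⟩
    intro v hv
    obtain ⟨a, haB, hav⟩ := exists_ne_mem_of_two_le_ncard hB.1.1 v
    have haWv : a ∈ W \ {v} := ⟨hBW haB, hav⟩
    have hDvconn : ∀ i, i ≤ k → (G.induce (D i \ {v})).Connected := by
      intro i hi
      rcases Nat.eq_zero_or_pos i with rfl | hipos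
      · rw [hD0]
        by_cases hvB : v ∈ B
        · exact hB.1.2.2 v hvB
        · rw [Set.diff_singleton_eq_self hvB]; exact hB.1.2.1
      · obtain ⟨m, rfl⟩ : ∃ m, i = m + 1 := ⟨i - 1, by omega⟩
        rw [hDs]
        by_cases hvC : v ∈ C m
        · exact ((hstep m (by omega)).1).1.2.2 v hvC
        · rw [Set.diff_singleton_eq_self hvC]; exact ((hstep m (by omega)).1).1.2.1
    -- up unions
    have hup : ∀ t, t ≤ k → (∀ j, j < t → p j ≠ v) →
        (G.induce (⋃ i ∈ Set.Iic t, (D i \ {v}))).Connected := by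
      intro t ht hcond
      refine chain_union_conn G (fun i => D i \ {v}) t
        (fun i hi => hDvconn i (by omega)) ?_
      intro i hi
      refine ⟨p i, ⟨?_, hcond i hi⟩, ⟨?_, hcond i hi⟩⟩
      · rcases Nat.eq_zero_or_pos i with rfl | hipos
        · rw [hD0]; exact h0
        · obtain ⟨m, rfl⟩ : ∃ m, i = m + 1 := ⟨i - 1, by omega⟩
          rw [hDs]; exact (hstep m (by omega)).2.2.2
      · rw [hDs]; exact (hstep i (by omega)).2.2.1
    -- down unions
    set E : ℕ → Set V := fun m => if m = 0 then B \ {v} else C (k - m) \ {v} with hE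
    have hE0 : E 0 = B \ {v} := by simp [hE]
    have hEs : ∀ m, m ≠ 0 → E m = C (k - m) \ {v} := by intro m hm; simp [hE, hm]
    have hdown : ∀ t, t ≤ k → (∀ j, t < j → j ≤ k → p j ≠ v) →
        (G.induce (⋃ m ∈ Set.Iic (k - t), E m)).Connected := by
      intro t ht hcond
      refine chain_union_conn G E (k - t) ?_ ?_
      · intro m hm
        rcases Nat.eq_zero_or_pos m with rfl | hmpos
        · rw [hE0]; exact hDvconn 0 (by omega)
        · rw [hEs m (by omega)]
          have := hDvconn (k - m + 1) (by omega)
          rwa [hDs] at this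
      · intro m hm
        rcases Nat.eq_zero_or_pos m with rfl | hmpos
        · -- glue B and C (k-1) at p k
          refine ⟨p k, ?_, ?_⟩
          · rw [hE0]; exact ⟨hk, hcond k (by omega) le_rfl⟩
          · rw [hEs 1 (by omega)]
            refine ⟨?_, hcond k (by omega) le_rfl⟩
            have h1 : k - 1 < k := by omega
            have h3 := (hstep (k-1) h1).2.2.2
            have e : k - 1 + 1 = k := by omega
            rwa [e] at h3
        · -- glue C (k-m) and C (k-m-1) at p (k-m)
          have h1 : k - m < k := by omega
          have h2 : k - (m+1) < k := by omega
          have he : k - (m+1) + 1 = k - m := by omega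
          refine ⟨p (k - m), ?_, ?_⟩
          · rw [hEs m (by omega)]
            exact ⟨(hstep (k-m) h1).2.2.1, hcond (k-m) (by omega) (by omega)⟩
          · rw [hEs (m+1) (by omega)]
            refine ⟨?_, hcond (k-m) (by omega) (by omega)⟩
            have h3 := (hstep (k - (m+1)) h2).2.2.2
            rwa [he] at h3
    -- patches
    refine SimpleGraph.induce_connected_of_patches a haWv ?_
    intro w hw
    obtain ⟨hwW, hwv⟩ := hw
    obtain ⟨i, hik, hwD⟩ := Set.mem_iUnion₂.1 hwW
    rw [Set.mem_Iic] at hik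
    rcases Nat.eq_zero_or_pos i with rfl | hipos
    · -- w ∈ B
      have hconnB : (G.induce (B \ {v})).Connected := by
        have h5 := hDvconn 0 (by omega)
        rwa [hD0] at h5
      refine ⟨B \ {v}, ?_, ⟨haB, hav⟩, ⟨by rwa [hD0] at hwD, hwv⟩, ?_⟩
      · intro b hb; exact ⟨hBW hb.1, hb.2⟩
      · exact hconnB.preconnected _ _
    · obtain ⟨m, rfl⟩ : ∃ m, i = m + 1 := ⟨i - 1, by omega⟩
      rw [hDs] at hwD
      have hmk : m < k := by omega
      by_cases hcond : ∀ j, j ≤ m → p j ≠ v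
      · -- use up union
        refine ⟨⋃ i ∈ Set.Iic (m+1), (D i \ {v}), ?_, ?_, ?_, ?_⟩
        · intro b hb
          obtain ⟨i', hi', hb'⟩ := Set.mem_iUnion₂.1 hb
          rw [Set.mem_Iic] at hi'
          exact ⟨Set.mem_iUnion₂.2 ⟨i', by simp; omega, hb'.1⟩, hb'.2⟩
        · exact Set.mem_iUnion₂.2 ⟨0, by simp, by rw [hD0]; exact ⟨haB, hav⟩⟩
        · exact Set.mem_iUnion₂.2 ⟨m+1, by simp, by rw [hDs]; exact ⟨hwD, hwv⟩⟩
        · exact (hup (m+1) (by omega) (fun j hj => hcond j (by omega))).preconnected _ _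
      · -- use down union
        push_neg at hcond
        obtain ⟨j₀, hj₀m, hj₀⟩ := hcond
        have hcond' : ∀ j, m < j → j ≤ k → p j ≠ v := by
          intro j hj hjk hpv
          exact hinj j₀ j (by omega) hjk (by rw [hj₀, hpv])
        refine ⟨⋃ m' ∈ Set.Iic (k - m), E m', ?_, ?_, ?_, ?_⟩
        · intro b hb
          obtain ⟨m', hm', hb'⟩ := Set.mem_iUnion₂.1 hb
          rw [Set.mem_Iic] at hm'
          rcases Nat.eq_zero_or_pos m' with rfl | hm'pos
          · rw [hE0] at hb'; exact ⟨hBW hb'.1, hb'.2⟩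
          · rw [hEs m' (by omega)] at hb'
            exact ⟨hCW (k - m') (by omega) hb'.1, hb'.2⟩
        · exact Set.mem_iUnion₂.2 ⟨0, by simp, by rw [hE0]; exact ⟨haB, hav⟩⟩
        · refine Set.mem_iUnion₂.2 ⟨k - m, by simp, ?_⟩
          rw [hEs (k - m) (by omega)]
          have : k - (k - m) = m := by omega
          rw [this]; exact ⟨hwD, hwv⟩
        · exact (hdown m (by omega) hcond').preconnected _ _
  -- contradiction with maximality
  have hBeqW : B = W := hB.2 W hWnc hBW
  have hC0W : C 0 ⊆ B := by
    rw [hBeqW]; exact hCW 0 hkpos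
  have hs0 := hstep 0 hkpos
  have h01 : p 0 ≠ p 1 := hinj 0 1 (by omega) (by omega)
  have := blocks_inter_subsingleton hs0.1 hB hs0.2.1
    ⟨hs0.2.2.1, hC0W hs0.2.2.1⟩ ⟨hs0.2.2.2, hC0W hs0.2.2.2⟩
  exact h01 this

lemma rtg_chain {B : Set V} {x y : V}
    (h : Relation.ReflTransGen
      (fun u v => ∃ C, IsBlock G C ∧ C ≠ B ∧ u ∈ C ∧ v ∈ C) x y) :
    ∃ (k : ℕ) (p : ℕ → V) (C : ℕ → Set V), p 0 = x ∧ p k = y ∧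
      ∀ i, i < k → IsBlock G (C i) ∧ C i ≠ B ∧ p i ∈ C i ∧ p (i+1) ∈ C i := by
  induction h with
  | refl => exact ⟨0, fun _ => x, fun _ => ∅, rfl, rfl, by omega⟩
  | @tail b c hxb hbc ih =>
    obtain ⟨k, p, C, hp0, hpk, hsteps⟩ := ih
    obtain ⟨D, hD1, hD2, hD3, hD4⟩ := hbc
    refine ⟨k+1, fun m => if m ≤ k then p m else c,
      fun m => if m < k then C m else D, by simp [hp0], by simp, ?_⟩
    intro i hi
    by_cases h1 : i < k
    · simp only [if_pos (by omega : i ≤ k), if_pos (by omega : i + 1 ≤ k), if_pos h1]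
      exact hsteps i h1
    · have h2 : i = k := by omega
      subst h2
      simp only [if_pos (le_refl i), if_neg (by omega : ¬ (i + 1 ≤ i)),
        if_neg (by omega : ¬ (i < i))]
      exact ⟨hD1, hD2, hpk ▸ hD3, hD4⟩

lemma blocks_acyclic [Fintype V] {B : Set V} (hB : IsBlock G B) {x y : V}
    (hx : x ∈ B) (hy : y ∈ B) (hxy : x ≠ y)
    (h : Relation.ReflTransGen
      (fun u v => ∃ C, IsBlock G C ∧ C ≠ B ∧ u ∈ C ∧ v ∈ C) x y) : False := by
  obtain ⟨k, p, C, hp0, hpk, hsteps⟩ := rtg_chain h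
  exact badChain_false hB k p C ⟨hp0 ▸ hx, hpk ▸ hy, by rw [hp0, hpk]; exact hxy, hsteps⟩

def FamConn (ℬ : Set (Set V)) : Prop :=
  ∀ B ∈ ℬ, ∀ B' ∈ ℬ, Relation.ReflTransGen
    (fun C C' => C ∈ ℬ ∧ C' ∈ ℬ ∧ (C ∩ C').Nonempty) B B'

def FamAcyclic (ℬ : Set (Set V)) : Prop :=
  ∀ B ∈ ℬ, ∀ x y : V, x ∈ B → y ∈ B → x ≠ y →
    ¬ Relation.ReflTransGen (fun u v => ∃ C ∈ ℬ, C ≠ B ∧ u ∈ C ∧ v ∈ C) x y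

def IsLeaf (ℬ : Set (Set V)) (B : Set V) (x : V) : Prop :=
  B ∈ ℬ ∧ x ∈ B ∧ ∀ B' ∈ ℬ, B' ≠ B → ∀ y ∈ B' ∩ B, y = x

lemma walk_rtg {ℬ : Set (Set V)} (Bs : ℕ → Set V) (xs : ℕ → V)
    (hmem : ∀ n, xs n ∈ Bs n) (hmem2 : ∀ n, xs (n+1) ∈ Bs n)
    (hℬ : ∀ n, Bs n ∈ ℬ) (Cbad : Set V) :
    ∀ a b, a ≤ b → (∀ m, a ≤ m → m < b → Bs m ≠ Cbad) →
    Relation.ReflTransGen (fun u v => ∃ C ∈ ℬ, C ≠ Cbad ∧ u ∈ C ∧ v ∈ C)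
      (xs a) (xs b) := by
  intro a b hab
  induction b, hab using Nat.le_induction with
  | base => intro _; exact Relation.ReflTransGen.refl
  | succ b hab ih =>
    intro hcond
    refine (ih (fun m h1 h2 => hcond m h1 (by omega))).tail ?_
    exact ⟨Bs b, hℬ b, hcond b hab (by omega), hmem b, hmem2 b⟩

lemma exists_leaf [Fintype V] {ℬ : Set (Set V)} (hne : ℬ.Nonempty)
    (hsize : ∀ B ∈ ℬ, B.Nonempty) (hacyc : FamAcyclic ℬ) :
    ∃ B x, IsLeaf ℬ B x := by
  by_contra hno
  push_neg at hno
  -- construct an infinite walk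
  have hstep : ∀ (B : Set V) (x : V), B ∈ ℬ → x ∈ B →
      ∃ (B' : Set V) (y : V), B' ∈ ℬ ∧ B' ≠ B ∧ y ∈ B' ∧ y ∈ B ∧ y ≠ x := by
    intro B x hB hx
    have := hno B x
    rw [IsLeaf] at this
    push_neg at this
    obtain ⟨B', hB', hBne, y, hy, hyx⟩ := this hB hx
    exact ⟨B', y, hB', hBne, hy.1, hy.2, hyx⟩
  obtain ⟨B₀, hB₀⟩ := hne
  obtain ⟨x₀, hx₀⟩ := hsize B₀ hB₀
  let S := {q : Set V × V // q.1 ∈ ℬ ∧ q.2 ∈ q.1}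
  let next : S → S := fun q =>
    ⟨((hstep q.1.1 q.1.2 q.2.1 q.2.2).choose,
      (hstep q.1.1 q.1.2 q.2.1 q.2.2).choose_spec.choose),
      (hstep q.1.1 q.1.2 q.2.1 q.2.2).choose_spec.choose_spec.1,
      (hstep q.1.1 q.1.2 q.2.1 q.2.2).choose_spec.choose_spec.2.2.1⟩
  let seq : ℕ → S := fun n => next^[n] ⟨(B₀, x₀), hB₀, hx₀⟩
  let Bs : ℕ → Set V := fun n => (seq n).1.1
  let xs : ℕ → V := fun n => (seq n).1.2
  have hseq : ∀ n, seq (n+1) = next (seq n) := by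
    intro n
    show next^[n+1] _ = next (next^[n] _)
    rw [Function.iterate_succ_apply']
  have hBs : ∀ n, Bs n ∈ ℬ := fun n => (seq n).2.1
  have hxs : ∀ n, xs n ∈ Bs n := fun n => (seq n).2.2
  have hkey : ∀ n, Bs (n+1) ≠ Bs n ∧ xs (n+1) ∈ Bs n ∧ xs (n+1) ≠ xs n := by
    intro n
    have h := (hstep (Bs n) (xs n) (hBs n) (hxs n)).choose_spec.choose_spec
    have e : seq (n+1) = next (seq n) := hseq n
    constructor
    · show (seq (n+1)).1.1 ≠ Bs n
      rw [e]; exact h.2.1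
    constructor
    · show (seq (n+1)).1.2 ∈ Bs n
      rw [e]; exact h.2.2.2.1
    · show (seq (n+1)).1.2 ≠ xs n
      rw [e]; exact h.2.2.2.2
  -- pigeonhole
  have hrep : ∃ d, 0 < d ∧ ∃ i, Bs (i + d) = Bs i := by
    obtain ⟨i, j, hij, heq⟩ := Finite.exists_ne_map_eq_of_infinite Bs
    rcases Nat.lt_or_ge i j with h | h
    · exact ⟨j - i, by omega, i, by rw [show i + (j - i) = j by omega]; exact heq.symm⟩
    · have h' : j < i := by omega
      exact ⟨i - j, by omega, j, by rw [show j + (i - j) = i by omega]; exact heq⟩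
  classical
  set d := Nat.find hrep with hd
  obtain ⟨hdpos, i, hBrep⟩ := Nat.find_spec hrep
  rw [← hd] at hdpos hBrep
  have hmin : ∀ d', 0 < d' → d' < d → ∀ i', Bs (i' + d') ≠ Bs i' := by
    intro d' h1 h2 i' heq
    exact (Nat.find_min hrep h2) ⟨h1, i', heq⟩
  have hd2 : 2 ≤ d := by
    by_contra h
    have hd1 : d = 1 := by omega
    rw [hd1] at hBrep
    exact (hkey i).1 hBrep
  -- no block Bs m with i < m < i + d equals Bs i, nor equals Bs (i+1) for i+1 < m
  have hdist : ∀ m, i < m → m < i + d → Bs m ≠ Bs i := by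
    intro m h1 h2 heq
    have : Bs (m + (i + d - m)) = Bs m := by
      rw [show m + (i + d - m) = i + d by omega, hBrep, heq]
    exact hmin (i + d - m) (by omega) (by omega) m this
  have hdist2 : ∀ m, i + 1 < m → m ≤ i + d - 1 → Bs m ≠ Bs (i+1) := by
    intro m h1 h2 heq
    have : Bs ((i+1) + (m - (i+1))) = Bs (i+1) := by
      rw [show (i+1) + (m - (i+1)) = m by omega]; exact heq
    exact hmin (m - (i+1)) (by omega) (by omega) (i+1) this
  by_cases hxx : xs (i+1) = xs (i+d)
  · -- use block Bs (i+1), points xs (i+2), xs (i+1)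
    have hd3 : 3 ≤ d := by
      by_contra h
      have h2 : d = 2 := by omega
      rw [h2, show i + 2 = (i+1)+1 from rfl] at hxx
      exact (hkey (i+1)).2.2 hxx.symm
    refine hacyc (Bs (i+1)) (hBs (i+1)) (xs (i+2)) (xs (i+1))
      ((hkey (i+1)).2.1) (hxs (i+1)) (hkey (i+1)).2.2 ?_
    have hpath := walk_rtg Bs xs hxs (fun n => (hkey n).2.1) hBs (Bs (i+1))
      (i+2) (i+d) (by omega)
      (fun m hm1 hm2 => hdist2 m (by omega) (by omega))
    rwa [← hxx] at hpath
  · -- use block Bs i, points xs (i+1), xs (i+d)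
    have h1 : xs (i+1) ∈ Bs i := (hkey i).2.1
    have h2 : xs (i+d) ∈ Bs i := by rw [← hBrep]; exact hxs (i+d)
    refine hacyc (Bs i) (hBs i) (xs (i+1)) (xs (i+d)) h1 h2 hxx ?_
    exact walk_rtg Bs xs hxs (fun n => (hkey n).2.1) hBs (Bs i)
      (i+1) (i+d) (by omega)
      (fun m hm1 hm2 => hdist m (by omega) (by omega))

/-- A leaf's attachment vertex lies in another block, provided there are  ≥ 2 blocks. -/
lemma leaf_attach {ℬ : Set (Set V)} (hconn : FamConn ℬ) {B : Set V} {x : V}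
    (hleaf : IsLeaf ℬ B x) {B'' : Set V} (hB'' : B'' ∈ ℬ) (hne : B'' ≠ B) :
    ∃ B' ∈ ℬ, B' ≠ B ∧ x ∈ B' := by
  obtain ⟨hB, hxB, hprop⟩ := hleaf
  have h := hconn B hB B'' hB''
  suffices hs : ∃ C ∈ ℬ, C ≠ B ∧ (B ∩ C).Nonempty by
    obtain ⟨C, hC, hCne, y, hy⟩ := hs
    have := hprop C hC hCne y ⟨hy.2, hy.1⟩
    exact ⟨C, hC, hCne, this ▸ hy.2⟩
  clear hprop
  induction h with
  | refl => exact absurd rfl hne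
  | @tail b c hxb hbc ih =>
    rcases eq_or_ne b B with rfl | hbB
    · exact ⟨c, hbc.2.1, hne, hbc.2.2⟩
    · exact ih hbc.1 hbB

section Leaf
variable {ℬ : Set (Set V)} {B : Set V} {x : V}

/-- hull of a subset of the rest of the structure only uses the smaller family. -/
lemma hull_transfer (hleaf : IsLeaf ℬ B x) {P : Set V}
    (hP : P ⊆ ⋃₀ (ℬ \ {B})) : aHull ℬ P = aHull (ℬ \ {B}) P := by
  apply le_antisymm
  · refine aHull_min (subset_aHull _ _) ?_
    intro C hC u hu v hv huv
    rcases eq_or_ne C B with rfl | hCB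
    · -- C = B : impossible to have two distinct points
      exfalso
      have hsub : C ∩ aHull (ℬ \ {C}) P ⊆ {x} := by
        intro b hb
        have hb2 := aHull_subset_union (ℬ \ {C}) P hb.2
        have hb3 : b ∈ ⋃₀ (ℬ \ {C}) := by
          rcases hb2 with h | h
          · exact hP h
          · exact h
        obtain ⟨C', hC', hbC'⟩ := hb3
        exact hleaf.2.2 C' hC'.1 hC'.2 b ⟨hbC', hb.1⟩
      have hux : u = x := hsub hu
      have hvx : v = x := hsub hv
      exact huv (hux.trans hvx.symm)
    · exact aHull_conv (ℬ \ {B}) P C ⟨hC, hCB⟩ u hu v hv huv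
  · exact aHull_anti Set.diff_subset P

lemma hull_transfer_subset (hleaf : IsLeaf ℬ B x) {P : Set V}
    (hP : P ⊆ ⋃₀ (ℬ \ {B})) : aHull ℬ P ⊆ ⋃₀ (ℬ \ {B}) := by
  rw [hull_transfer hleaf hP]
  intro p hp
  rcases aHull_subset_union (ℬ \ {B}) P hp with h | h
  · exact hP h
  · exact h

/-- Adding the extra vertex `s` of the leaf block: case `x` not in the small hull. -/
lemma hull_insert_out (hleaf : IsLeaf ℬ B x) {s : V} (hsB : s ∈ B) (hsx : s ≠ x)
    {P : Set V} (hP : P ⊆ ⋃₀ (ℬ \ {B})) (hx : x ∉ aHull (ℬ \ {B}) P) :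
    aHull ℬ (insert s P) ⊆ insert s (aHull (ℬ \ {B}) P) := by
  have hsU : s ∉ ⋃₀ (ℬ \ {B}) := by
    rintro ⟨C, hC, hsC⟩
    exact hsx (hleaf.2.2 C hC.1 hC.2 s ⟨hsC, hsB⟩)
  refine aHull_min ?_ ?_
  · intro a ha
    rcases ha with rfl | ha
    · exact Or.inl rfl
    · exact Or.inr (subset_aHull _ _ ha)
  · intro C hC u hu v hv huv
    rcases eq_or_ne C B with rfl | hCB
    · exfalso
      -- C ∩ (insert s hull') ⊆ {s, x} but x ∉ hull', so ⊆ {s}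
      have hsub : C ∩ insert s (aHull (ℬ \ {C}) P) ⊆ {s} := by
        rintro b ⟨hbC, hb⟩
        rcases hb with rfl | hb
        · rfl
        · exfalso
          have hb2 : b ∈ ⋃₀ (ℬ \ {C}) := by
            rcases aHull_subset_union (ℬ \ {C}) P hb with h | h
            · exact hP h
            · exact h
          obtain ⟨C', hC', hbC'⟩ := hb2
          have : b = x := hleaf.2.2 C' hC'.1 hC'.2 b ⟨hbC', hbC⟩
          exact hx (this ▸ hb)
      have := (hsub hu).trans (hsub hv).symm
      exact huv this
    · -- C ≠ B : s ∉ C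
      have hsC : s ∉ C := by
        intro hsC
        exact hsx (hleaf.2.2 C hC hCB s ⟨hsC, hsB⟩)
      have hu' : u ∈ C ∩ aHull (ℬ \ {B}) P := by
        refine ⟨hu.1, ?_⟩
        rcases hu.2 with rfl | h
        · exact absurd hu.1 hsC
        · exact h
      have hv' : v ∈ C ∩ aHull (ℬ \ {B}) P := by
        refine ⟨hv.1, ?_⟩
        rcases hv.2 with rfl | h
        · exact absurd hv.1 hsC
        · exact h
      intro b hb
      exact Or.inr (aHull_conv (ℬ \ {B}) P C ⟨hC, hCB⟩ u hu' v hv' huv hb)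

/-- Adding the extra vertex `s` of the leaf block: case `x` in the small hull. -/
lemma hull_insert_in (hleaf : IsLeaf ℬ B x) {s : V} (hsB : s ∈ B)
    {P : Set V} (hP : P ⊆ ⋃₀ (ℬ \ {B})) (hx : x ∈ aHull (ℬ \ {B}) P) :
    aHull ℬ (insert s P) ⊆ aHull (ℬ \ {B}) P ∪ B := by
  refine aHull_min ?_ ?_
  · intro a ha
    rcases ha with rfl | ha
    · exact Or.inr hsB
    · exact Or.inl (subset_aHull _ _ ha)
  · intro C hC u hu v hv huv
    rcases eq_or_ne C B with rfl | hCB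
    · exact fun b hb => Or.inr hb
    · have hCB' : ∀ b, b ∈ C → b ∈ B → b ∈ aHull (ℬ \ {B}) P := by
        intro b hbC hbB
        have : b = x := hleaf.2.2 C hC hCB b ⟨hbC, hbB⟩
        exact this ▸ hx
      have hu' : u ∈ C ∩ aHull (ℬ \ {B}) P := by
        refine ⟨hu.1, ?_⟩
        rcases hu.2 with h | h
        · exact h
        · exact hCB' u hu.1 h
      have hv' : v ∈ C ∩ aHull (ℬ \ {B}) P := by
        refine ⟨hv.1, ?_⟩
        rcases hv.2 with h | h
        · exact h
        · exact hCB' v hv.1 h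
      intro b hb
      exact Or.inl (aHull_conv (ℬ \ {B}) P C ⟨hC, hCB⟩ u hu' v hv' huv hb)

/-- The smaller family is still connected. -/
lemma famConn_diff (hconn : FamConn ℬ) (hleaf : IsLeaf ℬ B x)
    {B₀ : Set V} (hB₀ : B₀ ∈ ℬ) (hB₀ne : B₀ ≠ B) (hB₀x : x ∈ B₀) :
    FamConn (ℬ \ {B}) := by
  intro C hC C' hC'
  have h := hconn C hC.1 C' hC'.1
  have hCB : C ≠ B := hC.2
  have hC'B : C' ≠ B := hC'.2
  set π : Set V → Set V := fun D => if D = B then B₀ else D with hπdef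
  have hπB : π B = B₀ := by show (if B = B then B₀ else B) = B₀; rw [if_pos rfl]
  have hπn : ∀ D, D ≠ B → π D = D := by
    intro D hD; show (if D = B then B₀ else D) = D; rw [if_neg hD]
  have hmem : ∀ D ∈ ℬ, π D ∈ ℬ \ {B} := by
    intro D hD
    by_cases hDB : D = B
    · rw [hDB, hπB]; exact ⟨hB₀, hB₀ne⟩
    · rw [hπn D hDB]; exact ⟨hD, hDB⟩
  have hmap : ∀ a b, (a ∈ ℬ ∧ b ∈ ℬ ∧ (a ∩ b).Nonempty) →
      (π a ∈ ℬ \ {B} ∧ π b ∈ ℬ \ {B} ∧ (π a ∩ π b).Nonempty) := by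
    rintro a b ⟨ha, hb, y, hy⟩
    refine ⟨hmem a ha, hmem b hb, ?_⟩
    by_cases haB : a = B <;> by_cases hbB : b = B
    · rw [haB, hbB, hπB]; exact ⟨x, hB₀x, hB₀x⟩
    · rw [haB, hπB, hπn b hbB]
      have hyx : y = x := hleaf.2.2 b hb hbB y ⟨hy.2, haB ▸ hy.1⟩
      exact ⟨x, hB₀x, hyx ▸ hy.2⟩
    · rw [hbB, hπB, hπn a haB]
      have hyx : y = x := hleaf.2.2 a ha haB y ⟨hy.1, hbB ▸ hy.2⟩
      exact ⟨x, hyx ▸ hy.1, hB₀x⟩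
    · rw [hπn a haB, hπn b hbB]; exact ⟨y, hy⟩
  have key : Relation.ReflTransGen
      (fun C C' => C ∈ ℬ \ {B} ∧ C' ∈ ℬ \ {B} ∧ (C ∩ C').Nonempty) (π C) (π C') :=
    Relation.ReflTransGen.lift
    (p := fun C C' => C ∈ ℬ \ {B} ∧ C' ∈ ℬ \ {B} ∧ (C ∩ C').Nonempty) π hmap _ _ h
  rwa [hπn C hCB, hπn C' hC'B] at key

lemma famAcyclic_diff (hacyc : FamAcyclic ℬ) : FamAcyclic (ℬ \ {B}) := by
  intro C hC y z hy hz hyz h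
  refine hacyc C hC.1 y z hy hz hyz ?_
  refine Relation.ReflTransGen.mono ?_ _ _ h
  rintro u v ⟨D, hD, hDC, hu, hv⟩
  exact ⟨D, hD.1, hDC, hu, hv⟩

end Leaf

lemma aconv_of_subsingleton {ℬ : Set (Set V)} {T : Set V} (h : T.Subsingleton) :
    AConv ℬ T := by
  intro B hB u hu v hv huv
  exact absurd (h hu.2 hv.2) huv

lemma three_in_block {ℬ : Set (Set V)} {S B₁ : Set V} (hB₁ : B₁ ∈ ℬ)
    {s₁ s₂ s₃ : V} (hm1 : s₁ ∈ S) (hm2 : s₂ ∈ S) (hm3 : s₃ ∈ S)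
    (hb1 : s₁ ∈ B₁) (hb2 : s₂ ∈ B₁) (hb3 : s₃ ∈ B₁)
    (h12 : s₁ ≠ s₂) (h13 : s₁ ≠ s₃) (h23 : s₂ ≠ s₃) :
    (⋂ a ∈ S, aHull ℬ (S \ {a})).Nonempty := by
  refine ⟨s₁, Set.mem_iInter₂.2 ?_⟩
  intro a ha
  have hkey : B₁ ⊆ aHull ℬ (S \ {a}) := by
    rcases eq_or_ne a s₁ with rfl | h1
    · exact block_subset_aHull hB₁
        (subset_aHull _ _ ⟨hm2, h12.symm⟩) hb2
        (subset_aHull _ _ ⟨hm3, h13.symm⟩) hb3 h23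
    · rcases eq_or_ne a s₂ with rfl | h2
      · exact block_subset_aHull hB₁
          (subset_aHull _ _ ⟨hm1, h1.symm⟩) hb1
          (subset_aHull _ _ ⟨hm3, h23.symm⟩) hb3 h13
      · exact block_subset_aHull hB₁
          (subset_aHull _ _ ⟨hm1, h1.symm⟩) hb1
          (subset_aHull _ _ ⟨hm2, h2.symm⟩) hb2 h12
  exact hkey hb1

theorem abstract_up [Fintype V] :
    ∀ (n : ℕ) (ℬ : Set (Set V)), ℬ.ncard = n →
    (∀ B ∈ ℬ, 2 ≤ B.ncard) →
    FamConn ℬ → FamAcyclic ℬ →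
    ∀ S : Set V, S ⊆ ⋃₀ ℬ → n + 2 ≤ S.ncard →
    (⋂ a ∈ S, aHull ℬ (S \ {a})).Nonempty := by
  intro n
  induction n using Nat.strong_induction_on with
  | _ n IH =>
  intro ℬ hn h2 hconn hacyc S hSU hcard
  rcases Nat.eq_zero_or_pos n with rfl | hnpos
  · -- no blocks: S empty, contradiction
    exfalso
    have hempty : ℬ = ∅ := (Set.ncard_eq_zero (Set.toFinite _)).mp hn
    rw [hempty] at hSU
    simp only [Set.sUnion_empty] at hSU
    have : S = ∅ := Set.subset_empty_iff.mp hSU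
    rw [this, Set.ncard_empty] at hcard
    omega
  -- get three distinct elements of S
  have hS1 : S.Nonempty := by
    apply Set.nonempty_of_ncard_ne_zero; omega
  obtain ⟨s₁, hs₁⟩ := hS1
  have hd1 : (S \ {s₁}).ncard = S.ncard - 1 :=
    Set.ncard_diff_singleton_of_mem hs₁
  obtain ⟨s₂, hs₂', hs₂ne⟩ := exists_ne_mem_of_two_le_ncard
    (show 2 ≤ (S \ {s₁}).ncard by omega) s₁
  have hs₂ : s₂ ∈ S := hs₂'.1
  have h12 : s₁ ≠ s₂ := fun h => hs₂ne h.symm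
  rcases Nat.eq_or_lt_of_le hnpos with h1 | hn2
  · -- n = 1 : there is a single block
    obtain ⟨B, hB⟩ := (Set.ncard_eq_one (s := ℬ)).mp (by omega)
    have hSB : S ⊆ B := by
      intro t ht
      obtain ⟨C, hC, htC⟩ := hSU ht
      rw [hB, Set.mem_singleton_iff] at hC
      exact hC ▸ htC
    have hd2 : ((S \ {s₁}) \ {s₂}).ncard = S.ncard - 2 := by
      rw [Set.ncard_diff_singleton_of_mem hs₂']
      omega
    obtain ⟨s₃, hs₃'⟩ := Set.nonempty_of_ncard_ne_zero
      (s := (S \ {s₁}) \ {s₂}) (by omega)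
    have hs₃ : s₃ ∈ S := hs₃'.1.1
    have h13 : s₁ ≠ s₃ := fun h => hs₃'.1.2 h.symm
    have h23 : s₂ ≠ s₃ := fun h => hs₃'.2 h.symm
    exact three_in_block (hB ▸ rfl : B ∈ ℬ) hs₁ hs₂ hs₃ (hSB hs₁) (hSB hs₂)
      (hSB hs₃) h12 h13 h23
  -- n ≥ 2
  have hℬne : ℬ.Nonempty := Set.nonempty_of_ncard_ne_zero (by omega)
  obtain ⟨B, x, hleaf⟩ := exists_leaf hℬne
    (fun B hB => Set.nonempty_of_ncard_ne_zero (by have := h2 B hB; omega)) hacyc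
  obtain ⟨B'', hB''⟩ := exists_ne_mem_of_two_le_ncard
    (show 2 ≤ ℬ.ncard by omega) B
  obtain ⟨B₀, hB₀, hB₀ne, hB₀x⟩ := leaf_attach hconn hleaf hB''.1 hB''.2
  have hn' : (ℬ \ {B}).ncard = n - 1 := by
    rw [Set.ncard_diff_singleton_of_mem hleaf.1, hn]
  have h2' : ∀ B' ∈ ℬ \ {B}, 2 ≤ B'.ncard := fun B' h => h2 B' h.1
  have hconn' := famConn_diff hconn hleaf hB₀ hB₀ne hB₀x
  have hacyc' := famAcyclic_diff (B := B) hacyc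
  have hxU' : x ∈ ⋃₀ (ℬ \ {B}) := ⟨B₀, ⟨hB₀, hB₀ne⟩, hB₀x⟩
  have hmemU' : ∀ t ∈ S, t ∉ B \ {x} → t ∈ ⋃₀ (ℬ \ {B}) := by
    intro t ht htB
    obtain ⟨C, hC, htC⟩ := hSU ht
    rcases eq_or_ne C B with rfl | hCB
    · have : t = x := by
        by_contra h
        exact htB ⟨htC, h⟩
      exact this ▸ hxU'
    · exact ⟨C, ⟨hC, hCB⟩, htC⟩
  by_cases h3 : ∃ t₁ t₂ t₃, t₁ ∈ S ∧ t₂ ∈ S ∧ t₃ ∈ S ∧ t₁ ∈ B ∧ t₂ ∈ B ∧ t₃ ∈ B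
      ∧ t₁ ≠ t₂ ∧ t₁ ≠ t₃ ∧ t₂ ≠ t₃
  · obtain ⟨t₁, t₂, t₃, m1, m2, m3, b1, b2, b3, e12, e13, e23⟩ := h3
    exact three_in_block hleaf.1 m1 m2 m3 b1 b2 b3 e12 e13 e23
  · push_neg at h3
    by_cases hTwo : ∃ t₁ t₂, t₁ ∈ S ∧ t₂ ∈ S ∧ t₁ ∈ B \ {x} ∧ t₂ ∈ B \ {x} ∧ t₁ ≠ t₂
    · -- exactly two points of S in B \ {x}, and x ∉ S
      obtain ⟨t₁, t₂, m1, m2, b1, b2, e12⟩ := hTwo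
      have hxS : x ∉ S := by
        intro hxmem
        exact b2.2 (h3 t₁ t₂ x m1 m2 hxmem b1.1 b2.1 hleaf.2.1 e12 b1.2)
      have hSA : ∀ t ∈ S, t ∈ B \ {x} → t = t₁ ∨ t = t₂ := by
        intro t ht htB
        by_contra hc
        push_neg at hc
        exact hc.2 (h3 t₁ t₂ t m1 m2 ht b1.1 b2.1 htB.1 e12
          (fun h => hc.1 h.symm)).symm
      set S'' : Set V := insert x (S \ {t₁, t₂}) with hS''
      have hsub0 : S \ {t₁, t₂} ⊆ ⋃₀ (ℬ \ {B}) := by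
        intro t ht
        refine hmemU' t ht.1 ?_
        intro htB
        rcases hSA t ht.1 htB with rfl | rfl
        · exact ht.2 (Or.inl rfl)
        · exact ht.2 (Or.inr rfl)
      have hS''U : S'' ⊆ ⋃₀ (ℬ \ {B}) := by
        intro t ht
        rcases ht with rfl | ht
        · exact hxU'
        · exact hsub0 ht
      have hdiff2 : S \ {t₁, t₂} = (S \ {t₁}) \ {t₂} := by
        ext a; simp only [Set.mem_diff, Set.mem_insert_iff, Set.mem_singleton_iff]
        tauto
      have hc2 : (S \ {t₁, t₂}).ncard = S.ncard - 2 := by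
        rw [hdiff2, Set.ncard_diff_singleton_of_mem (show t₂ ∈ S \ {t₁} from ⟨m2, fun h => e12 h.symm⟩),
          Set.ncard_diff_singleton_of_mem m1]
        omega
      have hxnot : x ∉ S \ {t₁, t₂} := fun h => hxS h.1
      have hcS'' : S''.ncard = S.ncard - 1 := by
        rw [hS'', Set.ncard_insert_of_notMem hxnot (Set.toFinite _), hc2]
        omega
      obtain ⟨p, hp⟩ := IH (n-1) (by omega) (ℬ \ {B}) hn' h2' hconn' hacyc'
        S'' hS''U (by omega)
      rw [Set.mem_iInter₂] at hp
      refine ⟨p, Set.mem_iInter₂.2 ?_⟩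
      intro a ha
      have hSx : S'' \ {x} = S \ {t₁, t₂} := Set.insert_diff_self_of_notMem hxnot
      rcases eq_or_ne a t₁ with rfl | ha1
      · have hpx := hp x (Or.inl rfl)
        rw [hSx] at hpx
        rw [← hull_transfer hleaf hsub0] at hpx
        exact aHull_mono (S := S \ {a, t₂}) (S' := S \ {a})
          (fun b hb => ⟨hb.1, fun h => hb.2 (Or.inl h)⟩) hpx
      · rcases eq_or_ne a t₂ with rfl | ha2
        · have hpx := hp x (Or.inl rfl)
          rw [hSx] at hpx
          rw [← hull_transfer hleaf hsub0] at hpx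
          exact aHull_mono (S := S \ {t₁, a}) (S' := S \ {a})
            (fun b hb => ⟨hb.1, fun h => hb.2 (Or.inr h)⟩) hpx
        · have haS'' : a ∈ S'' := Or.inr ⟨ha, fun h => by
            rcases h with h | h
            · exact ha1 h
            · exact ha2 h⟩
          have hpa := hp a haS''
          have hsuba : S'' \ {a} ⊆ ⋃₀ (ℬ \ {B}) := fun b hb => hS''U hb.1
          rw [← hull_transfer hleaf hsuba] at hpa
          refine aHull_subset_hull ?_ hpa
          -- S'' \ {a} ⊆ aHull ℬ (S \ {a})
          intro t ht
          rcases ht.1 with rfl | ht'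
          · -- t = x : the block B is inside the hull
            have hBsub : B ⊆ aHull ℬ (S \ {a}) :=
              block_subset_aHull hleaf.1
                (subset_aHull ℬ (S \ {a}) ⟨m1, fun h => ha1 h.symm⟩) b1.1
                (subset_aHull ℬ (S \ {a}) ⟨m2, fun h => ha2 h.symm⟩) b2.1 e12
            exact hBsub hleaf.2.1
          · exact subset_aHull ℬ (S \ {a}) ⟨ht'.1, ht.2⟩
    · push_neg at hTwo
      by_cases hOne : ∃ t, t ∈ S ∧ t ∈ B \ {x}
      · obtain ⟨s, hsS, hsB⟩ := hOne
        set S₀ : Set V := S \ {s} with hS₀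
        have hS₀U : S₀ ⊆ ⋃₀ (ℬ \ {B}) := by
          intro t ht
          refine hmemU' t ht.1 ?_
          intro htB
          exact ht.2 (hTwo t s ht.1 hsS htB hsB)
        have hc0 : S₀.ncard = S.ncard - 1 :=
          Set.ncard_diff_singleton_of_mem hsS
        obtain ⟨p, hp⟩ := IH (n-1) (by omega) (ℬ \ {B}) hn' h2' hconn' hacyc'
          S₀ hS₀U (by omega)
        rw [Set.mem_iInter₂] at hp
        refine ⟨p, Set.mem_iInter₂.2 ?_⟩
        intro a ha
        rcases eq_or_ne a s with rfl | has
        · -- a = s : S \ {s} = S₀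
          have hS₀ne : S₀.Nonempty := Set.nonempty_of_ncard_ne_zero (s := S₀) (by omega)
          obtain ⟨a₀, ha₀⟩ := hS₀ne
          have := hp a₀ ha₀
          have hsuba : S₀ \ {a₀} ⊆ ⋃₀ (ℬ \ {B}) := fun b hb => hS₀U hb.1
          rw [← hull_transfer hleaf hsuba] at this
          exact aHull_mono (fun b hb => hb.1) this
        · have haS₀ : a ∈ S₀ := ⟨ha, has⟩
          have := hp a haS₀
          have hsuba : S₀ \ {a} ⊆ ⋃₀ (ℬ \ {B}) := fun b hb => hS₀U hb.1
          rw [← hull_transfer hleaf hsuba] at this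
          exact aHull_mono (S := S₀ \ {a}) (S' := S \ {a})
            (fun b hb => ⟨hb.1.1, hb.2⟩) this
      · -- no points of S in B \ {x} : S ⊆ smaller union
        push_neg at hOne
        have hSU' : S ⊆ ⋃₀ (ℬ \ {B}) := fun t ht => hmemU' t ht (hOne t ht)
        obtain ⟨p, hp⟩ := IH (n-1) (by omega) (ℬ \ {B}) hn' h2' hconn' hacyc'
          S hSU' (by omega)
        rw [Set.mem_iInter₂] at hp
        refine ⟨p, Set.mem_iInter₂.2 ?_⟩
        intro a ha
        have := hp a ha
        have hsuba : S \ {a} ⊆ ⋃₀ (ℬ \ {B}) := fun b hb => hSU' hb.1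
        rw [← hull_transfer hleaf hsuba] at this
        exact this

theorem abstract_low [Fintype V] :
    ∀ (n : ℕ) (ℬ : Set (Set V)), ℬ.ncard = n → 1 ≤ n →
    (∀ B ∈ ℬ, 2 ≤ B.ncard) → FamConn ℬ → FamAcyclic ℬ →
    ∃ S : Set V, S ⊆ ⋃₀ ℬ ∧ S.ncard = n + 1 ∧
      (⋂ a ∈ S, aHull ℬ (S \ {a})) = ∅ := by
  intro n
  induction n using Nat.strong_induction_on with
  | _ n IH =>
  intro ℬ hn hn1 h2 hconn hacyc
  rcases eq_or_lt_of_le hn1 with h1 | hn2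
  · -- n = 1 : a single block, S = two points of it
    obtain ⟨B, hB⟩ := (Set.ncard_eq_one (s := ℬ)).mp (by omega)
    have hBmem : B ∈ ℬ := hB ▸ rfl
    have hB2 := h2 B hBmem
    obtain ⟨u, hu⟩ := Set.nonempty_of_ncard_ne_zero (s := B) (by omega)
    obtain ⟨v, hvB, hvu⟩ := exists_ne_mem_of_two_le_ncard hB2 u
    have huv : u ≠ v := fun h => hvu h.symm
    refine ⟨{u, v}, ?_, ?_, ?_⟩
    · intro t ht
      rcases ht with rfl | ht
      · exact ⟨B, hBmem, hu⟩
      · rw [Set.mem_singleton_iff] at ht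
        exact ⟨B, hBmem, ht ▸ hvB⟩
    · rw [Set.ncard_pair huv]; omega
    · rw [Set.eq_empty_iff_forall_notMem]
      intro p hp
      rw [Set.mem_iInter₂] at hp
      have hu' := hp u (Or.inl rfl)
      have hv' := hp v (Or.inr rfl)
      have e1 : ({u, v} : Set V) \ {u} = {v} := by
        ext a
        simp only [Set.mem_diff, Set.mem_insert_iff, Set.mem_singleton_iff]
        constructor
        · rintro ⟨rfl | rfl, h⟩
          · exact absurd rfl h
          · rfl
        · rintro rfl
          exact ⟨Or.inr rfl, hvu⟩
      have e2 : ({u, v} : Set V) \ {v} = {u} := by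
        ext a
        simp only [Set.mem_diff, Set.mem_insert_iff, Set.mem_singleton_iff]
        constructor
        · rintro ⟨rfl | rfl, h⟩
          · rfl
          · exact absurd rfl h
        · rintro rfl
          exact ⟨Or.inl rfl, huv⟩
      rw [e1] at hu'
      rw [e2] at hv'
      have hh1 : p ∈ ({v} : Set V) :=
        aHull_min subset_rfl (aconv_of_subsingleton Set.subsingleton_singleton) hu'
      have hh2 : p ∈ ({u} : Set V) :=
        aHull_min subset_rfl (aconv_of_subsingleton Set.subsingleton_singleton) hv'
      rw [Set.mem_singleton_iff] at hh1 hh2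
      exact huv (hh2.symm.trans hh1)
  · -- n ≥ 2 : remove a leaf block
    have hℬne : ℬ.Nonempty := Set.nonempty_of_ncard_ne_zero (by omega)
    obtain ⟨B, x, hleaf⟩ := exists_leaf hℬne
      (fun B hB => Set.nonempty_of_ncard_ne_zero (by have := h2 B hB; omega)) hacyc
    obtain ⟨B'', hB''⟩ := exists_ne_mem_of_two_le_ncard
      (show 2 ≤ ℬ.ncard by omega) B
    obtain ⟨B₀, hB₀, hB₀ne, hB₀x⟩ := leaf_attach hconn hleaf hB''.1 hB''.2
    have hn' : (ℬ \ {B}).ncard = n - 1 := by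
      rw [Set.ncard_diff_singleton_of_mem hleaf.1, hn]
    have h2' : ∀ B' ∈ ℬ \ {B}, 2 ≤ B'.ncard := fun B' h => h2 B' h.1
    have hconn' := famConn_diff hconn hleaf hB₀ hB₀ne hB₀x
    have hacyc' := famAcyclic_diff (B := B) hacyc
    obtain ⟨S', hS'U, hS'c, hS'e⟩ := IH (n-1) (by omega) (ℬ \ {B}) hn'
      (by omega) h2' hconn' hacyc'
    obtain ⟨s, hsB, hsx⟩ := exists_ne_mem_of_two_le_ncard (h2 B hleaf.1) x
    have hsU' : s ∉ ⋃₀ (ℬ \ {B}) := by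
      rintro ⟨C, hC, hsC⟩
      exact hsx (hleaf.2.2 C hC.1 hC.2 s ⟨hsC, hsB⟩)
    have hsS' : s ∉ S' := fun h => hsU' (hS'U h)
    refine ⟨insert s S', ?_, ?_, ?_⟩
    · intro t ht
      rcases ht with rfl | ht
      · exact ⟨B, hleaf.1, hsB⟩
      · obtain ⟨C, hC, htC⟩ := hS'U ht
        exact ⟨C, hC.1, htC⟩
    · rw [Set.ncard_insert_of_notMem hsS' (Set.toFinite _), hS'c]
      omega
    · rw [Set.eq_empty_iff_forall_notMem]
      intro p hp
      rw [Set.mem_iInter₂] at hp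
      have hex : ∀ q : V, ∃ a ∈ S', q ∉ aHull (ℬ \ {B}) (S' \ {a}) := by
        intro q
        by_contra hc
        push_neg at hc
        have : q ∈ ⋂ a ∈ S', aHull (ℬ \ {B}) (S' \ {a}) := Set.mem_iInter₂.2 hc
        rw [hS'e] at this
        exact this
      have hps := hp s (Or.inl rfl)
      have hSdiff : insert s S' \ {s} = S' := Set.insert_diff_self_of_notMem hsS'
      rw [hSdiff] at hps
      have hpU' : p ∈ ⋃₀ (ℬ \ {B}) := hull_transfer_subset hleaf hS'U hps
      have hpns : p ≠ s := fun h => hsU' (h ▸ hpU')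
      obtain ⟨a', ha'S, hxa'⟩ := hex x
      have hsubdiff : ∀ a : V, S' \ {a} ⊆ ⋃₀ (ℬ \ {B}) := fun a b hb => hS'U hb.1
      have hdiffeq : ∀ a ∈ S', insert s S' \ {a} = insert s (S' \ {a}) := by
        intro a ha
        rw [Set.insert_sdiff_of_notMem]
        intro h
        rw [Set.mem_singleton_iff] at h
        exact hsS' (h ▸ ha)
      have hpa' := hp a' (Or.inr ha'S)
      rw [hdiffeq a' ha'S] at hpa'
      have hkey := hull_insert_out hleaf hsB hsx (hsubdiff a') hxa' hpa'
      have hpnx : p ≠ x := by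
        intro hpe
        rcases Set.mem_insert_iff.1 hkey with h | h
        · exact hpns h
        · exact hxa' (hpe ▸ h)
      have hall : ∀ a ∈ S', p ∈ aHull (ℬ \ {B}) (S' \ {a}) := by
        intro a ha
        have hpa := hp a (Or.inr ha)
        rw [hdiffeq a ha] at hpa
        by_cases hx : x ∈ aHull (ℬ \ {B}) (S' \ {a})
        · have hm := hull_insert_in hleaf hsB (hsubdiff a) hx hpa
          rcases hm with h | h
          · exact h
          · exfalso
            obtain ⟨C, hC, hpC⟩ := hpU'
            exact hpnx (hleaf.2.2 C hC.1 hC.2 p ⟨hpC, h⟩)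
        · have hm := hull_insert_out hleaf hsB hsx (hsubdiff a) hx hpa
          rcases Set.mem_insert_iff.1 hm with h | h
          · exact absurd h hpns
          · exact h
      obtain ⟨a₀, ha₀, hna₀⟩ := hex p
      exact hna₀ (hall a₀ ha₀)

lemma deltaHull_empty (G : SimpleGraph V) : deltaHull G ∅ = ∅ := by
  apply subset_antisymm
  · intro p hp
    exact hp ∅ ⟨subset_rfl, fun u v w hu => absurd hu (Set.notMem_empty u)⟩
  · exact Set.empty_subset _

lemma hellyIndep_singleton (G : SimpleGraph V) (v : V) : HellyIndep G {v} := by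
  unfold HellyIndep
  have h1 : (⋂ a ∈ ({v} : Set V), deltaHull G (({v} : Set V) \ {a}))
      = deltaHull G (({v} : Set V) \ {v}) := by
    simp only [Set.mem_singleton_iff, Set.iInter_iInter_eq_left]
  rw [h1, Set.diff_self, deltaHull_empty]


/-- If `G` is a finite simple connected block graph (every block complete)
with exactly `ℓ` blocks, then `h_Δ(G) = ℓ + 1`. -/
theorem stmt_8 {V : Type*} [Fintype V] (G : SimpleGraph V) (hconn : G.Connected)
    (hbg : ∀ B : Set V, IsBlock G B → CompleteOn G B)
    (ℓ : ℕ) (hℓ : {B : Set V | IsBlock G B}.ncard = ℓ) :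
    hellyNumber G = ℓ + 1 := by
  classical
  have hVne : Nonempty V := hconn.nonempty
  set ℬ : Set (Set V) := {B | IsBlock G B} with hℬ
  set hset : Set ℕ := {n : ℕ | ∃ S : Set V, HellyIndep G S ∧ S.ncard = n} with hsetdef
  rcases Nat.lt_or_ge (Fintype.card V) 2 with hcard | hcard
  · -- |V| = 1
    have hcard1 : Fintype.card V = 1 := by
      have := Fintype.card_pos (α := V)
      omega
    have hempty : ℬ = ∅ := by
      rw [Set.eq_empty_iff_forall_notMem]
      intro B hB
      have h2 : 2 ≤ B.ncard := hB.1.1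
      have : B.ncard ≤ (Set.univ : Set V).ncard :=
        Set.ncard_le_ncard (Set.subset_univ B) (Set.toFinite _)
      rw [Set.ncard_univ, Nat.card_eq_fintype_card, hcard1] at this
      omega
    have hl0 : ℓ = 0 := by
      rw [hempty, Set.ncard_empty] at hℓ
      omega
    obtain ⟨v⟩ := hVne
    have hmem1 : 1 ∈ hset := ⟨{v}, hellyIndep_singleton G v, Set.ncard_singleton v⟩
    have hub : ∀ m ∈ hset, m ≤ 1 := by
      rintro m ⟨S, _, rfl⟩
      have : S.ncard ≤ (Set.univ : Set V).ncard :=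
        Set.ncard_le_ncard (Set.subset_univ S) (Set.toFinite _)
      rw [Set.ncard_univ, Nat.card_eq_fintype_card, hcard1] at this
      omega
    rw [hl0]
    exact le_antisymm (csSup_le ⟨1, hmem1⟩ hub) (le_csSup ⟨1, hub⟩ hmem1)
  · -- |V| ≥ 2
    have h2 : ∀ B ∈ ℬ, 2 ≤ B.ncard := fun B hB => hB.1.1
    have hcover : ∀ v : V, v ∈ ⋃₀ ℬ := by
      intro v
      obtain ⟨B, hB, hvB⟩ := mem_block_of_connected hconn hcard v
      exact ⟨B, hB, hvB⟩
    have hfamconn : FamConn ℬ := by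
      intro B hB B' hB'
      obtain ⟨u, hu⟩ := Set.nonempty_of_ncard_ne_zero (s := B)
        (by have := h2 B hB; omega)
      obtain ⟨u', hu'⟩ := Set.nonempty_of_ncard_ne_zero (s := B')
        (by have := h2 B' hB'; omega)
      exact blocks_chain_connected hconn hB hB' hu hu'
    have hfamacyc : FamAcyclic ℬ := by
      intro B hB x y hx hy hxy hrtg
      exact blocks_acyclic hB hx hy hxy hrtg
    have hIeq : ∀ S : Set V, (⋂ a ∈ S, deltaHull G (S \ {a}))
        = ⋂ a ∈ S, aHull ℬ (S \ {a}) := by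
      intro S
      exact Set.iInter₂_congr (fun a _ => deltaHull_eq_aHull hbg _)
    have hl1 : 1 ≤ ℓ := by
      obtain ⟨v⟩ := hVne
      obtain ⟨B, hB, _⟩ := mem_block_of_connected hconn hcard v
      have hne : ℬ.Nonempty := ⟨B, hB⟩
      rcases Nat.eq_zero_or_pos ℓ with h0 | h
      · rw [h0] at hℓ
        rw [Set.ncard_eq_zero (Set.toFinite _)] at hℓ
        exact absurd hℓ (Set.nonempty_iff_ne_empty.mp hne)
      · exact h
    have hub : ∀ m ∈ hset, m ≤ ℓ + 1 := by
      rintro m ⟨S, hSind, rfl⟩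
      by_contra hlt
      push_neg at hlt
      have hne := abstract_up ℓ ℬ hℓ h2 hfamconn hfamacyc S
        (fun t _ => hcover t) (by omega)
      rw [HellyIndep] at hSind
      rw [hIeq S] at hSind
      exact hne.ne_empty hSind
    obtain ⟨S, hSU, hScard, hSempty⟩ :=
      abstract_low ℓ ℬ hℓ hl1 h2 hfamconn hfamacyc
    have hSind : HellyIndep G S := by
      rw [HellyIndep, hIeq S]
      exact hSempty
    have hmem : ℓ + 1 ∈ hset := ⟨S, hSind, hScard⟩
    exact le_antisymm (csSup_le ⟨ℓ + 1, hmem⟩ hub) (le_csSup ⟨ℓ + 1, hub⟩ hmem)
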